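/- arXiv:1803.10463 — 4 statements merged into one kernel-verified Lean document; each statement's English description precedes it below -/
import Mathlib

section
/- Suppose ∫_{A₋(μ)}^0 μ̄₋(x)^{1/2} dx = ∞ and ∫_0^{A₊(μ)} μ̄₊(x)^{1/2} dx = ∞. Then G₁(b) = ∞ for every admissible drift b; equivalently, the expected search time (2/D)·G₁(b) is infinite for every admissible drift. -/
open MeasureTheory Set Real
open scoped ENNReal

noncomputable section

namespace DiffusiveSearch

/-- `b` is piecewise continuous and locally bounded on `s`. -/
def PCLB (b : ℝ → ℝ) (s : Set ℝ) : Prop :=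
  (∃ E : Set ℝ, E.Countable ∧ ContinuousOn b (s \ E)) ∧
  ∀ K : Set ℝ, IsCompact K → K ⊆ s → ∃ M : ℝ, ∀ x ∈ K, |b x| ≤ M

/-- The left edge `A₋(μ)` of the support of the negative part of the target
distribution: `inf {x < 0 : μ₋((-∞,x]) > 0}`, as an extended real number. -/
def Aminus (ν : Measure ℝ) : EReal :=
  sInf ((fun x : ℝ => (x : EReal)) '' {x : ℝ | x < 0 ∧ 0 < ν (Iic x)})

/-- The right edge `A₊(μ)` of the support of the positive part of the target
distribution: `sup {x > 0 : μ₊([x,∞)) > 0}`, as an extended real number. -/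
def Aplus (ν : Measure ℝ) : EReal :=
  sSup ((fun x : ℝ => (x : EReal)) '' {x : ℝ | 0 < x ∧ 0 < ν (Ici x)})

/-- The open real interval with extended-real endpoints. -/
def io (l r : EReal) : Set ℝ := {x : ℝ | l < (x : EReal) ∧ (x : EReal) < r}

/-- `∫_0^x b(y) dy`. -/
def Bint (b : ℝ → ℝ) (x : ℝ) : ℝ := ∫ y in (0:ℝ)..x, b y

/-- The scale weight `exp((2/D)∫_0^x b(y) dy)`, as an extended nonnegative real. -/
def w (D : ℝ) (b : ℝ → ℝ) (x : ℝ) : ℝ≥0∞ := ENNReal.ofReal (Real.exp ((2/D) * Bint b x))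

/-- `b` is an admissible drift: piecewise continuous and locally bounded on
`(A₋, A₊)`, with finite scale integral (positive recurrence). -/
def Admissible (D : ℝ) (Am Ap : EReal) (b : ℝ → ℝ) : Prop :=
  PCLB b (io Am Ap) ∧ (∫⁻ x in io Am Ap, w D b x) < ⊤

/-- The tail `μ̄₋(x) = μ₋((-∞,x))`. -/
def tailm (μm : Measure ℝ) (x : ℝ) : ℝ := (μm (Iio x)).toReal

/-- The tail `μ̄₊(x) = μ₊((x,∞))`. -/
def tailp (μp : Measure ℝ) (x : ℝ) : ℝ := (μp (Ioi x)).toReal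

/-- The functional `G₁(b)`; `(2/D)·G₁(b)` is the expected search time. -/
def G1 (D p : ℝ) (μm μp : Measure ℝ) (b : ℝ → ℝ) : ℝ≥0∞ :=
  ENNReal.ofReal (1 - p) *
    ∫⁻ a in io (Aminus μm) 0,
      ENNReal.ofReal (tailm μm a * Real.exp (-(2/D) * Bint b a)) *
        (∫⁻ z in io (a : EReal) (Aplus μp), w D b z)
  + ENNReal.ofReal p *
    ∫⁻ a in io 0 (Aplus μp),
      ENNReal.ofReal (tailp μp a * Real.exp (-(2/D) * Bint b a)) *
        (∫⁻ z in io (Aminus μm) (a : EReal), w D b z)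

/-- `I₋ = ∫_{A₋(μ)}^0 μ̄₋(x)^{1/2} dx`, with values in `[0,∞]`. -/
def Im (μm : Measure ℝ) : ℝ≥0∞ :=
  ∫⁻ x in io (Aminus μm) 0, ENNReal.ofReal (Real.sqrt (tailm μm x))

/-- `I₊ = ∫_0^{A₊(μ)} μ̄₊(x)^{1/2} dx`, with values in `[0,∞]`. -/
def Ip (μp : Measure ℝ) : ℝ≥0∞ :=
  ∫⁻ x in io 0 (Aplus μp), ENNReal.ofReal (Real.sqrt (tailp μp x))

/-- The square root balance condition: `I₋, I₊` finite and
`I₊/I₋ = ((1-p)·log(1-p))/(p·log p)`. -/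
def SRBC (p : ℝ) (μm μp : Measure ℝ) : Prop :=
  Im μm ≠ ⊤ ∧ Ip μp ≠ ⊤ ∧
    (Ip μp).toReal / (Im μm).toReal = ((1 - p) * Real.log (1 - p)) / (p * Real.log p)

/-- The value `V(μ) = (2/D)·[((1-p)/|log p|)·I₋² + (p/|log(1-p)|)·I₊²]`. -/
def Vval (D p : ℝ) (μm μp : Measure ℝ) : ℝ :=
  (2/D) * (((1 - p) / |Real.log p|) * ((Im μm).toReal)^2
    + (p / |Real.log (1 - p)|) * ((Ip μp).toReal)^2)

/-- The candidate optimal drift `b₀`, expressed through densities `fm` of `μ₋`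
and `fp` of `μ₊` (so that `μ̄₋' = fm` and `μ̄₊' = -fp`). -/
def b0 (D p : ℝ) (μm μp : Measure ℝ) (fm fp : ℝ → ℝ) (x : ℝ) : ℝ :=
  if x < 0 then
    D * ((1/4) * (fm x / tailm μm x)
      - |Real.log p| / (2 * (Im μm).toReal) * Real.sqrt (tailm μm x))
  else
    D * ((1/4) * (-(fp x) / tailp μp x)
      + |Real.log (1 - p)| / (2 * (Ip μp).toReal) * Real.sqrt (tailp μp x))

/-- `μ₋` restricted to `(A₋(μ),0)` is absolutely continuous with piecewise
continuous, locally bounded density `fm`. -/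
def NiceDensityM (μm : Measure ℝ) (fm : ℝ → ℝ) : Prop :=
  PCLB fm (io (Aminus μm) 0) ∧
    μm.restrict (io (Aminus μm) 0) =
      (volume.restrict (io (Aminus μm) 0)).withDensity (fun x => ENNReal.ofReal (fm x))

/-- `μ₊` restricted to `(0,A₊(μ))` is absolutely continuous with piecewise
continuous, locally bounded density `fp`. -/
def NiceDensityP (μp : Measure ℝ) (fp : ℝ → ℝ) : Prop :=
  PCLB fp (io 0 (Aplus μp)) ∧
    μp.restrict (io 0 (Aplus μp)) =
      (volume.restrict (io 0 (Aplus μp))).withDensity (fun x => ENNReal.ofReal (fp x))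

lemma isOpen_io (l r : EReal) : IsOpen (io l r) :=
  (isOpen_Ioo (a := l) (b := r)).preimage continuous_coe_real_ereal

lemma measurableSet_io (l r : EReal) : MeasurableSet (io l r) :=
  (isOpen_io l r).measurableSet

lemma ordConnected_io (l r : EReal) : (io l r).OrdConnected := by
  constructor
  intro x hx y hy z hz
  exact ⟨lt_of_lt_of_le hx.1 (by exact_mod_cast hz.1),
    lt_of_le_of_lt (by exact_mod_cast hz.2) hy.2⟩

lemma PCLB.aemeasurable' {b : ℝ → ℝ} {s : Set ℝ} (hb : PCLB b s) (hs : MeasurableSet s) :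
    AEMeasurable b (volume.restrict s) := by
  obtain ⟨⟨E, hE, hcont⟩, -⟩ := hb
  have h1 : AEMeasurable b (volume.restrict (s \ E)) :=
    hcont.aemeasurable (hs.diff hE.measurableSet)
  have h2 : volume.restrict (s \ E) = volume.restrict s :=
    Measure.restrict_congr_set
      (diff_ae_eq_self.2 (measure_mono_null inter_subset_right (hE.measure_zero volume)))
  rwa [h2] at h1

lemma PCLB.intervalIntegrable' {b : ℝ → ℝ} {s : Set ℝ} (hb : PCLB b s) (hs : MeasurableSet s)
    {u v : ℝ} (huv : Set.uIcc u v ⊆ s) : IntervalIntegrable b volume u v := by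
  obtain ⟨M, hM⟩ := hb.2 (Set.uIcc u v) isCompact_uIcc huv
  rw [intervalIntegrable_iff]
  have hsub : Set.uIoc u v ⊆ s := Set.uIoc_subset_uIcc.trans huv
  have hmeas : AEMeasurable b (volume.restrict (Set.uIoc u v)) :=
    (hb.aemeasurable' hs).mono_measure (Measure.restrict_mono hsub le_rfl)
  refine ⟨hmeas.aestronglyMeasurable, ?_⟩
  refine HasFiniteIntegral.restrict_of_bounded (C := M) measure_Ioc_lt_top ?_
  refine (ae_restrict_iff' measurableSet_uIoc).2 (ae_of_all _ fun x hx => ?_)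
  exact hM x (Set.uIoc_subset_uIcc hx)

lemma PCLB.continuousOn_Bint {b : ℝ → ℝ} {s : Set ℝ} (hb : PCLB b s) (hs : IsOpen s)
    (hconn : s.OrdConnected) (h0 : (0:ℝ) ∈ s) : ContinuousOn (Bint b) s := by
  intro x₀ hx₀
  apply ContinuousAt.continuousWithinAt
  obtain ⟨ε, hε, hball⟩ := Metric.isOpen_iff.1 hs x₀ hx₀
  have hδ : 0 < ε / 2 := by positivity
  set δ := ε / 2 with hδdef
  have hIccs : Icc (x₀ - δ) (x₀ + δ) ⊆ s := by
    intro y hy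
    apply hball
    rw [Metric.mem_ball, Real.dist_eq, abs_lt]
    constructor
    · have := hy.1; simp only [hδdef] at *; linarith
    · have := hy.2; simp only [hδdef] at *; linarith
  set K : Set ℝ := Icc (min 0 (x₀ - δ)) (max 0 (x₀ + δ)) with hK
  have hKs : K ⊆ s := by
    apply hconn.out
    · rcases min_cases (0:ℝ) (x₀ - δ) with ⟨h, -⟩ | ⟨h, -⟩ <;> rw [h]
      · exact h0
      · exact hIccs ⟨le_refl _, by linarith⟩
    · rcases max_cases (0:ℝ) (x₀ + δ) with ⟨h, -⟩ | ⟨h, -⟩ <;> rw [h]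
      · exact h0
      · exact hIccs ⟨by linarith, le_refl _⟩
  obtain ⟨M, hM⟩ := hb.2 K isCompact_Icc hKs
  have h0K : (0:ℝ) ∈ K := ⟨min_le_left _ _, le_max_left _ _⟩
  have hM0 : 0 ≤ M := (abs_nonneg _).trans (hM 0 h0K)
  have hIccK : Icc (x₀ - δ) (x₀ + δ) ⊆ K := Icc_subset_Icc (min_le_right _ _) (le_max_right _ _)
  have key : ∀ x ∈ Icc (x₀ - δ) (x₀ + δ), ∀ y ∈ Icc (x₀ - δ) (x₀ + δ),
      dist (Bint b x) (Bint b y) ≤ M * dist x y := by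
    intro x hx y hy
    have h1 : IntervalIntegrable b volume 0 y :=
      hb.intervalIntegrable' hs.measurableSet
        ((Set.ordConnected_Icc.uIcc_subset h0K (hIccK hy)).trans hKs)
    have h2 : IntervalIntegrable b volume y x :=
      hb.intervalIntegrable' hs.measurableSet
        ((Set.ordConnected_Icc.uIcc_subset (hIccK hy) (hIccK hx)).trans hKs)
    have hadd := intervalIntegral.integral_add_adjacent_intervals h1 h2
    have hdiff : Bint b x - Bint b y = ∫ t in y..x, b t := by
      unfold Bint; linarith [hadd]
    rw [Real.dist_eq, Real.dist_eq, hdiff]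
    have hbd : ∀ t ∈ Set.uIoc y x, ‖b t‖ ≤ M := fun t ht =>
      hM t (hIccK ((Set.ordConnected_Icc.uIcc_subset hy hx) (Set.uIoc_subset_uIcc ht)))
    have := intervalIntegral.norm_integral_le_of_norm_le_const hbd
    simpa [Real.norm_eq_abs] using this
  have hlip : LipschitzOnWith (Real.toNNReal M) (Bint b) (Icc (x₀ - δ) (x₀ + δ)) := by
    apply LipschitzOnWith.of_dist_le_mul
    intro x hx y hy
    calc dist (Bint b x) (Bint b y) ≤ M * dist x y := key x hx y hy
      _ = (Real.toNNReal M : ℝ) * dist x y := by rw [Real.coe_toNNReal M hM0]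
  exact hlip.continuousOn.continuousAt (Icc_mem_nhds (by linarith) (by linarith))

lemma w_aemeasurable {D : ℝ} {b : ℝ → ℝ} {l r : EReal} (hb : PCLB b (io l r))
    (h0 : (0:ℝ) ∈ io l r) {t : Set ℝ} (ht : t ⊆ io l r) :
    AEMeasurable (w D b) (volume.restrict t) := by
  have hc : ContinuousOn (Bint b) (io l r) :=
    hb.continuousOn_Bint (isOpen_io l r) (ordConnected_io l r) h0
  have h1 : AEMeasurable (Bint b) (volume.restrict (io l r)) :=
    hc.aemeasurable (measurableSet_io l r)
  have h2 : AEMeasurable (Bint b) (volume.restrict t) :=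
    h1.mono_measure (Measure.restrict_mono ht le_rfl)
  unfold w
  exact ENNReal.measurable_ofReal.comp_aemeasurable
    (Real.measurable_exp.comp_aemeasurable (h2.const_mul (2/D)))

lemma exists_pos_edge {μp : Measure ℝ} [IsProbabilityMeasure μp] (hμp : μp (Iic 0) = 0) :
    ∃ x : ℝ, 0 < x ∧ 0 < μp (Ici x) := by
  by_contra h
  push_neg at h
  have hzero : ∀ x : ℝ, 0 < x → μp (Ici x) = 0 := fun x hx => le_antisymm (h x hx) zero_le
  have hsub : Ioi (0:ℝ) ⊆ ⋃ n : ℕ, Ici (1 / (n + 1) : ℝ) := by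
    intro x hx
    obtain ⟨n, hn⟩ := exists_nat_one_div_lt (mem_Ioi.1 hx)
    exact Set.mem_iUnion.2 ⟨n, le_of_lt hn⟩
  have h1 : μp (Ioi 0) = 0 :=
    measure_mono_null hsub (measure_iUnion_null fun n => hzero _ (by positivity))
  have h2 : μp univ = 0 := by
    rw [← Set.Iic_union_Ioi (a := (0:ℝ))]
    exact le_antisymm ((measure_union_le _ _).trans (by rw [hμp, h1]; simp)) zero_le
  simp [measure_univ] at h2

lemma exists_neg_edge {μm : Measure ℝ} [IsProbabilityMeasure μm] (hμm : μm (Ici 0) = 0) :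
    ∃ x : ℝ, x < 0 ∧ 0 < μm (Iic x) := by
  by_contra h
  push_neg at h
  have hzero : ∀ x : ℝ, x < 0 → μm (Iic x) = 0 := fun x hx => le_antisymm (h x hx) zero_le
  have hsub : Iio (0:ℝ) ⊆ ⋃ n : ℕ, Iic (-(1 / (n + 1)) : ℝ) := by
    intro x hx
    obtain ⟨n, hn⟩ := exists_nat_one_div_lt (K := ℝ) (neg_pos.2 hx)
    exact Set.mem_iUnion.2 ⟨n, by simp only [Set.mem_Iic]; linarith⟩
  have h1 : μm (Iio 0) = 0 :=
    measure_mono_null hsub (measure_iUnion_null fun n => hzero _ (by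
      rw [neg_lt_zero]; positivity))
  have h2 : μm univ = 0 := by
    rw [← Set.Iio_union_Ici (a := (0:ℝ))]
    exact le_antisymm ((measure_union_le _ _).trans (by rw [hμm, h1]; simp)) zero_le
  simp [measure_univ] at h2

lemma sqrt_le_aux {t r : ℝ} (ht : 0 ≤ t) : Real.sqrt t ≤ t * Real.exp (-r) + Real.exp r := by
  have h1 : Real.sqrt t = Real.sqrt (t * Real.exp (-r)) * Real.sqrt (Real.exp r) := by
    rw [← Real.sqrt_mul (by positivity)]
    congr 1
    rw [mul_assoc, ← Real.exp_add, neg_add_cancel, Real.exp_zero, mul_one]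
  have h2 : (Real.sqrt (t * Real.exp (-r)))^2 = t * Real.exp (-r) :=
    Real.sq_sqrt (by positivity)
  have h3 : (Real.sqrt (Real.exp r))^2 = Real.exp r := Real.sq_sqrt (Real.exp_pos r).le
  nlinarith [sq_nonneg (Real.sqrt (t * Real.exp (-r)) - Real.sqrt (Real.exp r)),
    Real.sqrt_nonneg (t * Real.exp (-r)), Real.sqrt_nonneg (Real.exp r)]


/-- if both square-root tail integrals are infinite, then
`G₁(b) = ∞` for every admissible drift `b`. -/
theorem search_time_infinite_of_balance_integrals_infinite
    (D p : ℝ) (hD : 0 < D) (hp : 0 < p) (hp1 : p < 1)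
    (μm μp : Measure ℝ) [IsProbabilityMeasure μm] [IsProbabilityMeasure μp]
    (hμm : μm (Ici 0) = 0) (hμp : μp (Iic 0) = 0)
    (hIm : Im μm = ⊤) (hIp : Ip μp = ⊤)
    (b : ℝ → ℝ) (hb : Admissible D (Aminus μm) (Aplus μp) b) :
    G1 D p μm μp b = ⊤ := by
  classical
  obtain ⟨hbP, hbS⟩ := hb
  have hAm : Aminus μm < (0 : EReal) := by
    obtain ⟨x, hx, hpos⟩ := exists_neg_edge hμm
    have hle : Aminus μm ≤ (x : EReal) := sInf_le ⟨x, ⟨hx, hpos⟩, rfl⟩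
    exact hle.trans_lt (by exact_mod_cast hx)
  obtain ⟨xp, hxp_pos, hxp⟩ := exists_pos_edge hμp
  have hxpAp : (xp : EReal) ≤ Aplus μp := le_sSup ⟨xp, ⟨hxp_pos, hxp⟩, rfl⟩
  have hAp : (0 : EReal) < Aplus μp := lt_of_lt_of_le (by exact_mod_cast hxp_pos) hxpAp
  have h0mem : (0:ℝ) ∈ io (Aminus μm) (Aplus μp) :=
    ⟨by rw [EReal.coe_zero]; exact hAm, by rw [EReal.coe_zero]; exact hAp⟩
  have hsub0 : io (Aminus μm) (0:EReal) ⊆ io (Aminus μm) (Aplus μp) :=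
    fun x hx => ⟨hx.1, hx.2.trans hAp⟩
  have hSm_lt : (∫⁻ x in io (Aminus μm) (0:EReal), w D b x) < ⊤ :=
    lt_of_le_of_lt (lintegral_mono_set hsub0) hbS
  set f : ℝ → ℝ≥0∞ := fun a => ENNReal.ofReal (tailm μm a * Real.exp (-(2/D) * Bint b a))
    with hfdef
  have hwmeas : AEMeasurable (w D b) (volume.restrict (io (Aminus μm) (0:EReal))) :=
    w_aemeasurable hbP h0mem hsub0
  have hptwise : ∀ x : ℝ, ENNReal.ofReal (Real.sqrt (tailm μm x)) ≤ f x + w D b x := by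
    intro x
    have h := sqrt_le_aux (t := tailm μm x) (r := (2/D) * Bint b x) ENNReal.toReal_nonneg
    calc ENNReal.ofReal (Real.sqrt (tailm μm x))
        ≤ ENNReal.ofReal (tailm μm x * Real.exp (-((2/D) * Bint b x))
            + Real.exp ((2/D) * Bint b x)) := ENNReal.ofReal_le_ofReal h
      _ = f x + w D b x := by
          have hnn : (0:ℝ) ≤ tailm μm x := ENNReal.toReal_nonneg
          rw [ENNReal.ofReal_add (mul_nonneg hnn (Real.exp_pos _).le) (Real.exp_pos _).le]
          simp only [hfdef, w, neg_mul]
  have hT : (∫⁻ a in io (Aminus μm) (0:EReal), f a) = ⊤ := by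
    by_contra hTne
    have hle : (∫⁻ x in io (Aminus μm) (0:EReal), ENNReal.ofReal (Real.sqrt (tailm μm x)))
        ≤ (∫⁻ a in io (Aminus μm) (0:EReal), f a)
          + ∫⁻ a in io (Aminus μm) (0:EReal), w D b a := by
      rw [← lintegral_add_right' f hwmeas]
      exact lintegral_mono hptwise
    have hIm' : (∫⁻ x in io (Aminus μm) (0:EReal), ENNReal.ofReal (Real.sqrt (tailm μm x)))
        = ⊤ := hIm
    rw [hIm'] at hle
    exact absurd (top_le_iff.1 hle) (ENNReal.add_ne_top.2 ⟨hTne, hSm_lt.ne⟩)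
  -- lower bound for inner integrals
  have hεpos : 0 < xp / 2 := by positivity
  have hIccsub : Icc (0:ℝ) (xp/2) ⊆ io (Aminus μm) (Aplus μp) := by
    intro y hy
    have hy0 : (0:ℝ) ≤ y := hy.1
    have hyx : y < xp := by have := hy.2; linarith
    refine ⟨lt_of_lt_of_le hAm ?_, lt_of_lt_of_le ?_ hxpAp⟩
    · exact_mod_cast hy0
    · exact_mod_cast hyx
  obtain ⟨M, hM⟩ := hbP.2 (Icc (0:ℝ) (xp/2)) isCompact_Icc hIccsub
  have hM0 : 0 ≤ M := (abs_nonneg _).trans (hM 0 ⟨le_refl _, hεpos.le⟩)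
  set c : ℝ≥0∞ := ENNReal.ofReal (Real.exp (-((2/D) * (M * (xp/2))))) * ENNReal.ofReal (xp/2)
    with hcdef
  have hc0 : c ≠ 0 := by
    rw [hcdef]
    exact mul_ne_zero (ENNReal.ofReal_pos.2 (Real.exp_pos _)).ne'
      (ENNReal.ofReal_pos.2 hεpos).ne'
  have hcT : c ≠ ⊤ := ENNReal.mul_ne_top ENNReal.ofReal_ne_top ENNReal.ofReal_ne_top
  have hinner : ∀ a : ℝ, a ∈ io (Aminus μm) (0:EReal) →
      c ≤ ∫⁻ z in io (a : EReal) (Aplus μp), w D b z := by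
    intro a ha
    have haneg : a < 0 := by exact_mod_cast ha.2
    have hsub2 : Ioo (0:ℝ) (xp/2) ⊆ io (a:EReal) (Aplus μp) := by
      intro y hy
      have h1 : a < y := haneg.trans hy.1
      have h2 : y < xp := by have := hy.2; linarith
      exact ⟨by exact_mod_cast h1, lt_of_lt_of_le (by exact_mod_cast h2) hxpAp⟩
    have hptw : ∀ y ∈ Ioo (0:ℝ) (xp/2),
        ENNReal.ofReal (Real.exp (-((2/D) * (M * (xp/2))))) ≤ w D b y := by
      intro y hy
      have hbd : ∀ t ∈ Set.uIoc (0:ℝ) y, ‖b t‖ ≤ M := by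
        intro t ht
        rw [Set.uIoc_of_le hy.1.le] at ht
        exact hM t ⟨ht.1.le, ht.2.trans hy.2.le⟩
      have hB : |Bint b y| ≤ M * (xp/2) := by
        have h2 := intervalIntegral.norm_integral_le_of_norm_le_const hbd
        rw [Real.norm_eq_abs] at h2
        have h3 : |y - 0| = y := by rw [sub_zero, abs_of_pos hy.1]
        rw [h3] at h2
        exact h2.trans (mul_le_mul_of_nonneg_left hy.2.le hM0)
      have hD2 : (0:ℝ) < 2/D := by positivity
      have h4 : -((2/D) * (M * (xp/2))) ≤ (2/D) * Bint b y := by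
        have h5 : -(M * (xp/2)) ≤ Bint b y := neg_le_of_abs_le hB
        nlinarith
      unfold w
      exact ENNReal.ofReal_le_ofReal (Real.exp_le_exp.2 h4)
    calc c = ENNReal.ofReal (Real.exp (-((2/D) * (M * (xp/2))))) * volume (Ioo (0:ℝ) (xp/2)) := by
          rw [hcdef, Real.volume_Ioo, sub_zero]
      _ = ∫⁻ _ in Ioo (0:ℝ) (xp/2),
            ENNReal.ofReal (Real.exp (-((2/D) * (M * (xp/2))))) := (setLIntegral_const _ _).symm
      _ ≤ ∫⁻ y in Ioo (0:ℝ) (xp/2), w D b y :=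
          lintegral_mono_ae ((ae_restrict_iff' measurableSet_Ioo).2 (ae_of_all _ hptw))
      _ ≤ ∫⁻ z in io (a : EReal) (Aplus μp), w D b z := lintegral_mono_set hsub2
  have hfirst : (∫⁻ a in io (Aminus μm) (0:EReal),
      ENNReal.ofReal (tailm μm a * Real.exp (-(2/D) * Bint b a)) *
        (∫⁻ z in io (a : EReal) (Aplus μp), w D b z)) = ⊤ := by
    rw [eq_top_iff]
    calc (⊤:ℝ≥0∞) = (∫⁻ a in io (Aminus μm) (0:EReal), f a) * c := by
          rw [hT, ENNReal.top_mul hc0]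
      _ = ∫⁻ a in io (Aminus μm) (0:EReal), f a * c := (lintegral_mul_const' c f hcT).symm
      _ ≤ _ := lintegral_mono_ae ((ae_restrict_iff' (measurableSet_io _ _)).2
          (ae_of_all _ fun a ha => mul_le_mul_right (hinner a ha) (f a)))
  unfold G1
  rw [eq_top_iff]
  refine le_trans ?_ (mul_le_mul_right (lintegral_mono fun a => self_le_add_right _ _) _)
  rw [hfirst, ENNReal.mul_top (ENNReal.ofReal_pos.2 (by linarith)).ne']

end DiffusiveSearch
end
end

section
/- Let ν be a Borel probability measure on (0,∞) and set ν̄(x) = ν((x,∞)) for x ≥ 0. If ∫_0^∞ x²·|log x|^{1+ε} ν(dx) < ∞ for some ε > 0, then ∫_0^∞ ν̄(x)^{1/2} dx < ∞. -/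
open MeasureTheory Set Real
open scoped ENNReal

noncomputable section

namespace DiffusiveSearch

/-- AM–GM form: `√t ≤ t·a + 1/a` for `t ≥ 0`, `a > 0`. -/
private lemma sqrt_le_amgm {t a : ℝ} (ht : 0 ≤ t) (ha : 0 < a) :
    Real.sqrt t ≤ t * a + 1 / a := by
  have h1 : 0 ≤ t * a := mul_nonneg ht ha.le
  have h2 : 0 ≤ 1 / a := by positivity
  have key : Real.sqrt t = Real.sqrt (t * a) * Real.sqrt (1 / a) := by
    rw [← Real.sqrt_mul h1]
    congr 1
    field_simp
  rw [key]
  nlinarith [sq_nonneg (Real.sqrt (t * a) - Real.sqrt (1 / a)), Real.sq_sqrt h1,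
    Real.sq_sqrt h2, Real.sqrt_nonneg (t * a), Real.sqrt_nonneg (1 / a)]

/-- a `x²·|log x|^{1+ε}` moment bound implies finiteness of the
square-root tail integral. -/
theorem sqrt_tail_integrable_of_moment
    (ν : Measure ℝ) [IsProbabilityMeasure ν] (hν : ν (Iic 0) = 0)
    (ε : ℝ) (hε : 0 < ε)
    (hmom : (∫⁻ x in Ioi (0:ℝ), ENNReal.ofReal (x ^ 2 * |Real.log x| ^ (1 + ε)) ∂ν) < ⊤) :
    (∫⁻ x in Ioi (0:ℝ), ENNReal.ofReal (Real.sqrt ((ν (Ioi x)).toReal))) < ⊤ := by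
  set e : ℝ := Real.exp 1 with he
  have he1 : (1:ℝ) < e := by
    have := Real.add_one_le_exp (1:ℝ); linarith
  have he0 : (0:ℝ) < e := by linarith
  -- the weight `a x = x (log x)^{1+ε}`
  set a : ℝ → ℝ := fun x => x * Real.log x ^ (1 + ε) with ha_def
  set G : ℝ → ℝ≥0∞ := fun x => ENNReal.ofReal (a x) with hG_def
  set T : ℝ → ℝ≥0∞ := fun x => ν (Ioi x) with hT_def
  have hT_meas : Measurable T :=
    Antitone.measurable (fun x y hxy => measure_mono (Ioi_subset_Ioi hxy))
  have ha_meas : Measurable a := by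
    apply measurable_id.mul
    exact Real.measurable_log.pow_const _
  have hG_meas : Measurable G := ha_meas.ennreal_ofReal
  have hlog : ∀ x : ℝ, e < x → 1 ≤ Real.log x := by
    intro x hx
    have : Real.log e ≤ Real.log x := Real.log_le_log he0 hx.le
    rwa [he, Real.log_exp] at this
  have ha_pos : ∀ x : ℝ, e < x → 0 < a x := by
    intro x hx
    have h1 := hlog x hx
    exact mul_pos (by linarith) (Real.rpow_pos_of_pos (by linarith) _)
  -- split the integral at `e`
  rw [← Ioc_union_Ioi_eq_Ioi he0.le,
    lintegral_union measurableSet_Ioi (Ioc_disjoint_Ioi le_rfl)]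
  have part1 : (∫⁻ x in Ioc (0:ℝ) e, ENNReal.ofReal (Real.sqrt ((ν (Ioi x)).toReal))) < ⊤ := by
    have hb : ∀ x : ℝ, ENNReal.ofReal (Real.sqrt ((ν (Ioi x)).toReal)) ≤ 1 := by
      intro x
      rw [ENNReal.ofReal_le_one]
      have h1 : ν (Ioi x) ≤ 1 := prob_le_one
      have h2 : (ν (Ioi x)).toReal ≤ 1 := by
        calc (ν (Ioi x)).toReal ≤ (1 : ℝ≥0∞).toReal :=
              ENNReal.toReal_mono ENNReal.one_ne_top h1
          _ = 1 := by simp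
      exact Real.sqrt_le_one.2 h2
    calc (∫⁻ x in Ioc (0:ℝ) e, ENNReal.ofReal (Real.sqrt ((ν (Ioi x)).toReal)))
        ≤ ∫⁻ _ in Ioc (0:ℝ) e, 1 := lintegral_mono fun x => hb x
      _ = volume (Ioc (0:ℝ) e) := by simp
      _ < ⊤ := by rw [Real.volume_Ioc]; exact ENNReal.ofReal_lt_top
  refine ENNReal.add_lt_top.mpr ⟨part1, ?_⟩
  -- main pointwise bound on `(e, ∞)`
  have key : ∀ x ∈ Ioi e, ENNReal.ofReal (Real.sqrt ((ν (Ioi x)).toReal)) ≤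
      T x * G x + ENNReal.ofReal ((a x)⁻¹) := by
    intro x hx
    have hax : 0 < a x := ha_pos x hx
    have ht0 : (0:ℝ) ≤ (ν (Ioi x)).toReal := ENNReal.toReal_nonneg
    calc ENNReal.ofReal (Real.sqrt ((ν (Ioi x)).toReal))
        ≤ ENNReal.ofReal ((ν (Ioi x)).toReal * a x + 1 / a x) :=
          ENNReal.ofReal_le_ofReal (sqrt_le_amgm ht0 hax)
      _ = ENNReal.ofReal ((ν (Ioi x)).toReal * a x) + ENNReal.ofReal (1 / a x) :=
          ENNReal.ofReal_add (mul_nonneg ht0 hax.le) (by positivity)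
      _ = T x * G x + ENNReal.ofReal ((a x)⁻¹) := by
          rw [ENNReal.ofReal_mul ht0, ENNReal.ofReal_toReal (measure_ne_top ν _), one_div]
  -- the two pieces
  have J2 : (∫⁻ x in Ioi e, ENNReal.ofReal ((a x)⁻¹)) < ⊤ := by
    set g : ℝ → ℝ := fun x => -(ε⁻¹) * Real.log x ^ (-ε) with hg_def
    have hderiv : ∀ x ∈ Ioi e, HasDerivAt g ((a x)⁻¹) x := by
      intro x hx
      have hx1 : 1 < x := lt_trans he1 hx
      have hlx : 1 ≤ Real.log x := hlog x hx
      have h1 : HasDerivAt Real.log x⁻¹ x := Real.hasDerivAt_log (by positivity)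
      have h2 : HasDerivAt (fun y => Real.log y ^ (-ε))
          (x⁻¹ * (-ε) * Real.log x ^ (-ε - 1)) x :=
        h1.rpow_const (Or.inl (by linarith))
      have h3 := h2.const_mul (-(ε⁻¹))
      refine h3.congr_deriv ?_
      symm
      have hlx0 : (0:ℝ) < Real.log x := by linarith
      have hrp : (0:ℝ) < Real.log x ^ (1 + ε) := Real.rpow_pos_of_pos hlx0 _
      rw [show (-ε - 1 : ℝ) = -(1 + ε) by ring, Real.rpow_neg hlx0.le]
      field_simp
      exact div_self (ha_pos x hx).ne'
    have g'nonneg : ∀ x ∈ Ioi e, 0 ≤ (a x)⁻¹ := fun x hx => (inv_pos.mpr (ha_pos x hx)).le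
    have htend : Filter.Tendsto g Filter.atTop (nhds 0) := by
      have h1 : Filter.Tendsto (fun x : ℝ => Real.log x ^ (-ε)) Filter.atTop (nhds 0) :=
        (tendsto_rpow_neg_atTop hε).comp Real.tendsto_log_atTop
      have h2 := h1.const_mul (-(ε⁻¹))
      rw [mul_zero] at h2
      exact h2
    have hcont : ContinuousWithinAt g (Ici e) e := by
      apply ContinuousAt.continuousWithinAt
      have hle : Real.log e ≠ 0 := by rw [he, Real.log_exp]; norm_num
      exact continuousAt_const.mul
        ((Real.continuousAt_log (by positivity)).rpow_const (Or.inl hle))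
    have hint : IntegrableOn (fun x => (a x)⁻¹) (Ioi e) :=
      integrableOn_Ioi_deriv_of_nonneg hcont hderiv g'nonneg htend
    exact hint.setLIntegral_lt_top
  have J1 : (∫⁻ x in Ioi e, T x * G x) < ⊤ := by
    set F : ℝ → ℝ → ℝ≥0∞ :=
      fun x y => ({p : ℝ × ℝ | p.1 < p.2}.indicator (fun p => G p.1)) (x, y) with hF_def
    have hFmeas : AEMeasurable (Function.uncurry F) ((volume.restrict (Ioi e)).prod ν) := by
      apply Measurable.aemeasurable
      exact (hG_meas.comp measurable_fst).indicator
        (measurableSet_lt measurable_fst measurable_snd)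
    have step1 : ∀ x : ℝ, (∫⁻ y, F x y ∂ν) = T x * G x := by
      intro x
      have hFx : ∀ y, F x y = (Ioi x).indicator (fun _ => G x) y := by
        intro y
        simp only [hF_def, indicator, mem_setOf_eq, mem_Ioi]
      calc (∫⁻ y, F x y ∂ν) = ∫⁻ y, (Ioi x).indicator (fun _ => G x) y ∂ν := by
            simp_rw [hFx]
        _ = G x * ν (Ioi x) := lintegral_indicator_const measurableSet_Ioi _
        _ = T x * G x := mul_comm _ _
    have step2 : ∀ y : ℝ, (∫⁻ x in Ioi e, F x y) ≤
        ENNReal.ofReal (y ^ 2 * |Real.log y| ^ (1 + ε)) := by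
      intro y
      have hFy : ∀ x, F x y = (Iio y).indicator G x := by
        intro x
        simp only [hF_def, indicator, mem_setOf_eq, mem_Iio]
      have heq : (∫⁻ x in Ioi e, F x y) = ∫⁻ x in Ioo e y, G x := by
        simp_rw [hFy]
        rw [lintegral_indicator measurableSet_Iio, Measure.restrict_restrict measurableSet_Iio,
          Iio_inter_Ioi]
      rw [heq]
      rcases le_or_gt y e with hy | hy
      · rw [Ioo_eq_empty (by exact fun h => absurd hy (not_le.mpr h))]
        simp
      · have hy1 : 1 < y := lt_trans he1 hy
        have hly : 1 ≤ Real.log y := hlog y hy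
        have hbd : ∀ x ∈ Ioo e y, G x ≤ ENNReal.ofReal (y * Real.log y ^ (1 + ε)) := by
          intro x hx
          apply ENNReal.ofReal_le_ofReal
          have hx1 : 1 < x := lt_trans he1 hx.1
          have hlx : 0 ≤ Real.log x := Real.log_nonneg hx1.le
          have hll : Real.log x ≤ Real.log y := Real.log_le_log (by linarith) hx.2.le
          exact mul_le_mul hx.2.le (Real.rpow_le_rpow hlx hll (by linarith))
            (Real.rpow_nonneg hlx _) (by linarith)
        calc (∫⁻ x in Ioo e y, G x)
            ≤ ∫⁻ _ in Ioo e y, ENNReal.ofReal (y * Real.log y ^ (1 + ε)) :=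
              setLIntegral_mono measurable_const hbd
          _ = ENNReal.ofReal (y * Real.log y ^ (1 + ε)) * volume (Ioo e y) := by
              rw [setLIntegral_const]
          _ ≤ ENNReal.ofReal (y * Real.log y ^ (1 + ε)) * ENNReal.ofReal y := by
              rw [Real.volume_Ioo]
              exact mul_le_mul_right (ENNReal.ofReal_le_ofReal (by linarith)) _
          _ = ENNReal.ofReal (y ^ 2 * |Real.log y| ^ (1 + ε)) := by
              rw [← ENNReal.ofReal_mul (by positivity)]
              congr 1
              rw [abs_of_nonneg (by linarith : (0:ℝ) ≤ Real.log y)]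
              ring
    have hres : ν.restrict (Ioi (0:ℝ)) = ν := by
      apply Measure.restrict_eq_self_of_ae_mem
      rw [Filter.eventually_iff, mem_ae_iff,
        show {x : ℝ | x ∈ Ioi (0:ℝ)}ᶜ = Iic 0 from by ext x; simp [not_lt]]
      exact hν
    calc (∫⁻ x in Ioi e, T x * G x) = ∫⁻ x in Ioi e, ∫⁻ y, F x y ∂ν := by
          refine lintegral_congr fun x => (step1 x).symm
      _ = ∫⁻ y, (∫⁻ x in Ioi e, F x y) ∂ν := lintegral_lintegral_swap hFmeas
      _ ≤ ∫⁻ y, ENNReal.ofReal (y ^ 2 * |Real.log y| ^ (1 + ε)) ∂ν :=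
          lintegral_mono fun y => step2 y
      _ = ∫⁻ y in Ioi (0:ℝ), ENNReal.ofReal (y ^ 2 * |Real.log y| ^ (1 + ε)) ∂ν := by
          rw [hres]
      _ < ⊤ := hmom
  calc (∫⁻ x in Ioi e, ENNReal.ofReal (Real.sqrt ((ν (Ioi x)).toReal)))
      ≤ ∫⁻ x in Ioi e, (T x * G x + ENNReal.ofReal ((a x)⁻¹)) := by
        apply setLIntegral_mono (by fun_prop) key
    _ = (∫⁻ x in Ioi e, T x * G x) + ∫⁻ x in Ioi e, ENNReal.ofReal ((a x)⁻¹) :=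
        lintegral_add_left (hT_meas.mul hG_meas) _
    _ < ⊤ := ENNReal.add_lt_top.mpr ⟨J1, J2⟩
end DiffusiveSearch
end
end

section
/- There exists a Borel probability measure ν on (0,∞) such that ∫_0^∞ x²·|log x|^{1-ε} ν(dx) < ∞ for every ε ∈ (0,1), yet ∫_0^∞ ν̄(x)^{1/2} dx = ∞. In particular, any probability measure ν on (0,∞) whose tail satisfies ν̄(x) = x^{-2}(log x)^{-2} for all x ≥ 2 has this property. -/
open MeasureTheory Set Real
open Filter
open scoped ENNReal Topology

noncomputable section

namespace DiffusiveSearch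

/-- bound on (0,2] -/
lemma small_bound {ε : ℝ} (hε0 : 0 < ε) (hε1 : ε < 1) :
    ∀ x ∈ Ioc (0:ℝ) 2, x ^ 2 * |Real.log x| ^ (1 - ε) ≤ 8 := by
  intro x hx
  obtain ⟨hx0, hx2⟩ := hx
  have h1e : (0:ℝ) ≤ 1 - ε := by linarith
  have habs : |Real.log x| ^ (1 - ε) ≤ 1 + |Real.log x| := by
    rcases le_or_gt |Real.log x| 1 with h | h
    · have := Real.rpow_le_one (abs_nonneg _) h h1e
      linarith [abs_nonneg (Real.log x)]
    · calc |Real.log x| ^ (1 - ε) ≤ |Real.log x| ^ (1:ℝ) :=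
            Real.rpow_le_rpow_of_exponent_le h.le (by linarith)
        _ = |Real.log x| := Real.rpow_one _
        _ ≤ 1 + |Real.log x| := by linarith
  have hx2sq : x ^ 2 ≤ 4 := by nlinarith
  have hxlog : x ^ 2 * |Real.log x| ≤ 4 := by
    rcases le_or_gt 1 x with h1 | h1
    · rw [abs_of_nonneg (Real.log_nonneg h1)]
      have hl : Real.log x ≤ 1 := by
        have := Real.log_le_sub_one_of_pos hx0
        linarith
      nlinarith [Real.log_nonneg h1]
    · rw [abs_of_neg (Real.log_neg hx0 h1)]
      have hinv : -Real.log x ≤ 1 / x := by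
        have h := Real.log_le_sub_one_of_pos (show (0:ℝ) < 1 / x by positivity)
        rw [one_div, Real.log_inv] at h
        have : (0:ℝ) < 1 / x := by positivity
        rw [one_div] at *
        linarith
      calc x ^ 2 * (-Real.log x) ≤ x ^ 2 * (1 / x) :=
            mul_le_mul_of_nonneg_left hinv (sq_nonneg x)
        _ = x := by field_simp [pow_two]
        _ ≤ 4 := by linarith
  calc x ^ 2 * |Real.log x| ^ (1 - ε) ≤ x ^ 2 * (1 + |Real.log x|) :=
        mul_le_mul_of_nonneg_left habs (sq_nonneg x)
    _ = x ^ 2 + x ^ 2 * |Real.log x| := by ring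
    _ ≤ 8 := by linarith

lemma cover_Ioi_two : Ioi (2:ℝ) ⊆ ⋃ n : ℕ, Ioc ((2:ℝ) ^ (n+1)) ((2:ℝ) ^ (n+2)) := by
  intro x hx
  have hx2 : (2:ℝ) < x := hx
  have hex : ∃ m : ℕ, x ≤ 2 ^ (m+2) := by
    obtain ⟨k, hk⟩ := pow_unbounded_of_one_lt x (one_lt_two : (1:ℝ) < 2)
    exact ⟨k, hk.le.trans (pow_le_pow_right₀ one_le_two (by omega))⟩
  classical
  set n := Nat.find hex with hn
  have hn2 : x ≤ 2 ^ (n+2) := Nat.find_spec hex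
  have hlt : (2:ℝ) ^ (n+1) < x := by
    rcases Nat.eq_zero_or_pos n with h0 | hpos
    · rw [h0]; simpa using hx2
    · obtain ⟨m, hm⟩ := Nat.exists_eq_succ_of_ne_zero hpos.ne'
      have hmin := Nat.find_min hex (by omega : m < n)
      push_neg at hmin
      have : n + 1 = m + 2 := by omega
      rw [this]
      exact hmin
  exact mem_iUnion.mpr ⟨n, hlt, hn2⟩

lemma summable_aux {ε : ℝ} (hε0 : 0 < ε) (hε1 : ε < 1) :
    Summable (fun n : ℕ => 4 * ((n:ℝ) + 2) ^ (1 - ε) / (((n:ℝ) + 1) ^ 2 * (Real.log 2) ^ 2)) := by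
  have hl2 : (0:ℝ) < Real.log 2 := Real.log_pos one_lt_two
  have hs : Summable (fun n : ℕ => ((n:ℝ) + 1) ^ (-(1 + ε))) := by
    have h := Real.summable_nat_rpow (p := -(1 + ε)).mpr (by linarith)
    have h2 := (summable_nat_add_iff 1).mpr h
    refine h2.congr fun n => ?_
    push_cast
    ring_nf
  refine Summable.of_nonneg_of_le (fun n => by positivity)
    (fun n => ?_) (hs.mul_left (8 / (Real.log 2) ^ 2))
  have hn1 : (0:ℝ) < (n:ℝ) + 1 := by positivity
  have h1e : (0:ℝ) ≤ 1 - ε := by linarith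
  have hb : ((n:ℝ) + 2) ^ (1 - ε) ≤ 2 * ((n:ℝ) + 1) ^ (1 - ε) := by
    calc ((n:ℝ) + 2) ^ (1 - ε) ≤ (2 * ((n:ℝ) + 1)) ^ (1 - ε) :=
          Real.rpow_le_rpow (by positivity) (by linarith) h1e
      _ = 2 ^ (1 - ε) * ((n:ℝ) + 1) ^ (1 - ε) :=
          Real.mul_rpow (by norm_num) hn1.le
      _ ≤ 2 * ((n:ℝ) + 1) ^ (1 - ε) := by
          have : (2:ℝ) ^ (1 - ε) ≤ 2 ^ (1:ℝ) :=
            Real.rpow_le_rpow_of_exponent_le one_le_two (by linarith)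
          rw [Real.rpow_one] at this
          exact mul_le_mul_of_nonneg_right this (Real.rpow_nonneg hn1.le _)
  have hkey : ((n:ℝ) + 1) ^ (1 - ε) / ((n:ℝ) + 1) ^ 2 = ((n:ℝ) + 1) ^ (-(1 + ε)) := by
    rw [show (((n:ℝ) + 1) ^ 2 : ℝ) = ((n:ℝ) + 1) ^ (2:ℝ) by
        rw [← Real.rpow_natCast ((n:ℝ)+1) 2]; norm_num,
      ← Real.rpow_sub hn1]
    norm_num
    ring_nf
  calc 4 * ((n:ℝ) + 2) ^ (1 - ε) / (((n:ℝ) + 1) ^ 2 * (Real.log 2) ^ 2)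
      ≤ 4 * (2 * ((n:ℝ) + 1) ^ (1 - ε)) / (((n:ℝ) + 1) ^ 2 * (Real.log 2) ^ 2) := by
        gcongr
    _ = (8 / (Real.log 2) ^ 2) * (((n:ℝ) + 1) ^ (1 - ε) / ((n:ℝ) + 1) ^ 2) := by
        field_simp; ring
    _ = (8 / (Real.log 2) ^ 2) * ((n:ℝ) + 1) ^ (-(1 + ε)) := by rw [hkey]

lemma annulus_bound (ν : Measure ℝ)
    (htail : ∀ x : ℝ, 2 ≤ x → ν (Ioi x) = ENNReal.ofReal (1 / (x ^ 2 * (Real.log x) ^ 2)))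
    {ε : ℝ} (hε0 : 0 < ε) (hε1 : ε < 1) (n : ℕ) :
    (∫⁻ x in Ioc ((2:ℝ) ^ (n+1)) ((2:ℝ) ^ (n+2)),
        ENNReal.ofReal (x ^ 2 * |Real.log x| ^ (1 - ε)) ∂ν)
      ≤ ENNReal.ofReal (4 * ((n:ℝ) + 2) ^ (1 - ε) / (((n:ℝ) + 1) ^ 2 * (Real.log 2) ^ 2)) := by
  have hl2 : (0:ℝ) < Real.log 2 := Real.log_pos one_lt_two
  have hl2' : Real.log 2 ≤ 1 := by linarith [Real.log_le_sub_one_of_pos (by norm_num : (0:ℝ) < 2)]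
  have h1e : (0:ℝ) ≤ 1 - ε := by linarith
  have h2n1 : (2:ℝ) ≤ 2 ^ (n+1) := by
    calc (2:ℝ) = 2 ^ 1 := (pow_one 2).symm
    _ ≤ 2 ^ (n+1) := pow_le_pow_right₀ one_le_two (by omega)
  set B : ℝ := ((2:ℝ) ^ (n+2)) ^ 2 * ((n:ℝ) + 2) ^ (1 - ε) with hB
  have hBnn : 0 ≤ B := by positivity
  have hpt : ∀ x ∈ Ioc ((2:ℝ) ^ (n+1)) ((2:ℝ) ^ (n+2)),
      ENNReal.ofReal (x ^ 2 * |Real.log x| ^ (1 - ε)) ≤ ENNReal.ofReal B := by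
    intro x hx
    obtain ⟨hx1, hx2⟩ := hx
    have hx0 : (0:ℝ) < x := lt_of_lt_of_le (by positivity) hx1.le
    have hxgt1 : (1:ℝ) < x := lt_of_lt_of_le (by linarith) hx1.le
    refine ENNReal.ofReal_le_ofReal ?_
    have hsq : x ^ 2 ≤ ((2:ℝ) ^ (n+2)) ^ 2 := by nlinarith
    have hlogx : Real.log x ≤ (n:ℝ) + 2 := by
      calc Real.log x ≤ Real.log ((2:ℝ) ^ (n+2)) :=
            Real.log_le_log hx0 hx2
        _ = ((n:ℝ) + 2) * Real.log 2 := by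
            rw [Real.log_pow]; push_cast; ring
        _ ≤ ((n:ℝ) + 2) * 1 := by
            have : (0:ℝ) ≤ (n:ℝ) + 2 := by positivity
            nlinarith
        _ = (n:ℝ) + 2 := mul_one _
    have habs : |Real.log x| ^ (1 - ε) ≤ ((n:ℝ) + 2) ^ (1 - ε) := by
      rw [abs_of_nonneg (Real.log_nonneg hxgt1.le)]
      exact Real.rpow_le_rpow (Real.log_nonneg hxgt1.le) hlogx h1e
    exact mul_le_mul hsq habs (Real.rpow_nonneg (abs_nonneg _) _) (by positivity)
  calc (∫⁻ x in Ioc ((2:ℝ) ^ (n+1)) ((2:ℝ) ^ (n+2)),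
        ENNReal.ofReal (x ^ 2 * |Real.log x| ^ (1 - ε)) ∂ν)
      ≤ ∫⁻ _ in Ioc ((2:ℝ) ^ (n+1)) ((2:ℝ) ^ (n+2)), ENNReal.ofReal B ∂ν :=
        setLIntegral_mono' measurableSet_Ioc hpt
    _ = ENNReal.ofReal B * ν (Ioc ((2:ℝ) ^ (n+1)) ((2:ℝ) ^ (n+2))) := setLIntegral_const _ _
    _ ≤ ENNReal.ofReal B * ν (Ioi ((2:ℝ) ^ (n+1))) := by
        gcongr
        exact Ioc_subset_Ioi_self
    _ = ENNReal.ofReal B *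
        ENNReal.ofReal (1 / (((2:ℝ) ^ (n+1)) ^ 2 * (Real.log ((2:ℝ) ^ (n+1))) ^ 2)) := by
        rw [htail _ h2n1]
    _ = ENNReal.ofReal (B * (1 / (((2:ℝ) ^ (n+1)) ^ 2 * (Real.log ((2:ℝ) ^ (n+1))) ^ 2))) :=
        (ENNReal.ofReal_mul hBnn).symm
    _ ≤ ENNReal.ofReal (4 * ((n:ℝ) + 2) ^ (1 - ε) / (((n:ℝ) + 1) ^ 2 * (Real.log 2) ^ 2)) := by
        refine ENNReal.ofReal_le_ofReal (le_of_eq ?_)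
        rw [hB, Real.log_pow]
        have h2n1' : ((2:ℝ) ^ (n+1)) ≠ 0 := by positivity
        have hcast : ((n+1 : ℕ):ℝ) = (n:ℝ) + 1 := by push_cast; ring
        rw [hcast]
        have hpow : ((2:ℝ) ^ (n+2)) ^ 2 = 4 * ((2:ℝ) ^ (n+1)) ^ 2 := by
          rw [show n + 2 = (n+1) + 1 by omega, pow_succ]
          ring
        rw [hpow]
        field_simp

lemma sqrt_tail_top (ν : Measure ℝ)
    (htail : ∀ x : ℝ, 2 ≤ x → (ν (Ioi x)).toReal = 1 / (x ^ 2 * (Real.log x) ^ 2)) :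
    (∫⁻ x in Ioi (0:ℝ), ENNReal.ofReal (Real.sqrt ((ν (Ioi x)).toReal))) = ⊤ := by
  refine ENNReal.eq_top_of_forall_nnreal_le fun r => ?_
  have hll : Tendsto (fun x => Real.log (Real.log x)) atTop atTop :=
    Real.tendsto_log_atTop.comp Real.tendsto_log_atTop
  obtain ⟨R, hR2, hRr⟩ : ∃ R : ℝ, 2 ≤ R ∧
      (r:ℝ) + Real.log (Real.log 2) ≤ Real.log (Real.log R) := by
    obtain ⟨R, h1, h2⟩ :=
      ((hll.eventually_ge_atTop ((r:ℝ) + Real.log (Real.log 2))).and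
        (eventually_ge_atTop (2:ℝ))).exists
    exact ⟨R, h2, h1⟩
  -- continuity of the integrand
  have hc : ContinuousOn (fun x : ℝ => 1 / (x * Real.log x)) (Icc 2 R) := by
    refine ContinuousOn.div continuousOn_const
      (continuousOn_id.mul (Real.continuousOn_log.mono ?_)) ?_
    · intro x hx
      simp only [mem_compl_iff, mem_singleton_iff]
      have : (2:ℝ) ≤ x := hx.1
      intro h; rw [h] at this; norm_num at this
    · intro x hx
      have hx0 : (0:ℝ) < x := lt_of_lt_of_le two_pos hx.1
      have hlx : 0 < Real.log x := Real.log_pos (by linarith [hx.1])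
      have : x * Real.log x ≠ 0 := by positivity
      simpa using this
  have hD : ∀ x ∈ uIcc (2:ℝ) R,
      HasDerivAt (fun y => Real.log (Real.log y)) (1 / (x * Real.log x)) x := by
    rw [uIcc_of_le hR2]
    intro x hx
    have hx0 : (0:ℝ) < x := lt_of_lt_of_le two_pos hx.1
    have hlx : 0 < Real.log x := Real.log_pos (by linarith [hx.1])
    have h1 : HasDerivAt Real.log x⁻¹ x := Real.hasDerivAt_log hx0.ne'
    have h2 : HasDerivAt Real.log (Real.log x)⁻¹ (Real.log x) :=
      Real.hasDerivAt_log hlx.ne'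
    have := h2.comp x h1
    rw [show (1:ℝ) / (x * Real.log x) = (Real.log x)⁻¹ * x⁻¹ by ring]
    exact this
  have hintg : IntervalIntegrable (fun x : ℝ => 1 / (x * Real.log x)) volume 2 R := by
    rw [intervalIntegrable_iff_integrableOn_Icc_of_le hR2]
    exact hc.integrableOn_compact isCompact_Icc
  have hFTC : ∫ x in (2:ℝ)..R, 1 / (x * Real.log x)
      = Real.log (Real.log R) - Real.log (Real.log 2) :=
    intervalIntegral.integral_eq_sub_of_hasDerivAt hD hintg
  have hIoc : IntegrableOn (fun x : ℝ => 1 / (x * Real.log x)) (Ioc 2 R) volume :=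
    (hc.integrableOn_compact isCompact_Icc).mono_set Ioc_subset_Icc_self
  calc (r : ℝ≥0∞) = ENNReal.ofReal (r:ℝ) := ENNReal.ofReal_coe_nnreal.symm
    _ ≤ ENNReal.ofReal (∫ x in Ioc (2:ℝ) R, 1 / (x * Real.log x)) := by
        refine ENNReal.ofReal_le_ofReal ?_
        rw [← intervalIntegral.integral_of_le hR2, hFTC]
        linarith
    _ = ∫⁻ x in Ioc (2:ℝ) R, ENNReal.ofReal (1 / (x * Real.log x)) := by
        refine ofReal_integral_eq_lintegral_ofReal hIoc ?_
        refine (ae_restrict_iff' measurableSet_Ioc).mpr (ae_of_all _ fun x hx => ?_)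
        have hx0 : (0:ℝ) < x := lt_trans two_pos hx.1
        have hlx : 0 < Real.log x := Real.log_pos (by linarith [hx.1])
        positivity
    _ = ∫⁻ x in Ioc (2:ℝ) R, ENNReal.ofReal (Real.sqrt ((ν (Ioi x)).toReal)) := by
        refine setLIntegral_congr_fun measurableSet_Ioc (fun x hx => ?_)
        have hx2 : (2:ℝ) ≤ x := hx.1.le
        have hx0 : (0:ℝ) < x := lt_of_lt_of_le two_pos hx2
        have hlx : 0 < Real.log x := Real.log_pos (by linarith)
        rw [htail x hx2]
        have hs : Real.sqrt (((x * Real.log x) ^ 2)⁻¹) = (x * Real.log x)⁻¹ := by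
          rw [Real.sqrt_inv, Real.sqrt_sq (by positivity)]
        congr 1
        rw [show x ^ 2 * Real.log x ^ 2 = (x * Real.log x) ^ 2 by ring, one_div, one_div]
        exact hs.symm
    _ ≤ ∫⁻ x in Ioi (0:ℝ), ENNReal.ofReal (Real.sqrt ((ν (Ioi x)).toReal)) :=
        lintegral_mono_set fun x hx => lt_trans two_pos hx.1

def Ftail (x : ℝ) : ℝ := if x < 2 then 0 else 1 - 1 / (x ^ 2 * (Real.log x) ^ 2)

lemma denom_mono : ∀ ⦃x y : ℝ⦄, 2 ≤ x → x ≤ y →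
    x ^ 2 * (Real.log x) ^ 2 ≤ y ^ 2 * (Real.log y) ^ 2 := by
  intro x y hx hxy
  have hx0 : (0:ℝ) < x := by linarith
  have hlx : 0 ≤ Real.log x := Real.log_nonneg (by linarith)
  have hly : Real.log x ≤ Real.log y := Real.log_le_log hx0 hxy
  have h2 : (Real.log x) ^ 2 ≤ (Real.log y) ^ 2 := by nlinarith
  have h1 : x ^ 2 ≤ y ^ 2 := by nlinarith
  nlinarith [sq_nonneg x, sq_nonneg (Real.log x)]

lemma denom_pos {x : ℝ} (hx : 2 ≤ x) : 0 < x ^ 2 * (Real.log x) ^ 2 := by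
  have hx0 : (0:ℝ) < x := by linarith
  have hlx : 0 < Real.log x := Real.log_pos (by linarith)
  positivity

lemma tail_lt_one {x : ℝ} (hx : 2 ≤ x) : 1 / (x ^ 2 * (Real.log x) ^ 2) < 1 := by
  have h2 : (4 : ℝ) * (Real.log 2) ^ 2 ≤ x ^ 2 * (Real.log x) ^ 2 := by
    have := denom_mono (le_refl 2) hx
    nlinarith [this]
  have hlog2 : (0.6931471803 : ℝ) < Real.log 2 := Real.log_two_gt_d9
  have h1 : (1 : ℝ) < x ^ 2 * (Real.log x) ^ 2 := by nlinarith
  rw [div_lt_one (by linarith)]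
  exact h1

lemma Ftail_mono : Monotone Ftail := by
  intro x y hxy
  unfold Ftail
  rcases lt_or_ge x 2 with hx | hx
  · rw [if_pos hx]
    rcases lt_or_ge y 2 with hy | hy
    · rw [if_pos hy]
    · rw [if_neg (not_lt.mpr hy)]
      have := tail_lt_one hy
      linarith
  · rw [if_neg (not_lt.mpr hx), if_neg (not_lt.mpr (le_trans hx hxy))]
    have h := denom_mono hx hxy
    have hpx := denom_pos hx
    have hdiv : 1 / (y ^ 2 * (Real.log y) ^ 2) ≤ 1 / (x ^ 2 * (Real.log x) ^ 2) :=
      one_div_le_one_div_of_le hpx h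
    linarith

lemma Ftail_rightCont (x : ℝ) : ContinuousWithinAt Ftail (Ici x) x := by
  rcases lt_or_ge x 2 with hx | hx
  · have hev : ∀ᶠ y in 𝓝 x, Ftail y = 0 := by
      filter_upwards [Iio_mem_nhds hx] with y hy
      exact if_pos hy
    have : ContinuousWithinAt (fun _ : ℝ => (0:ℝ)) (Ici x) x := continuousWithinAt_const
    refine this.congr_of_eventuallyEq ?_ (if_pos hx)
    exact (hev.filter_mono nhdsWithin_le_nhds)
  · have hx0 : (0:ℝ) < x := by linarith
    have hlx : 0 < Real.log x := Real.log_pos (by linarith)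
    have hg : ContinuousAt (fun y : ℝ => 1 - 1 / (y ^ 2 * (Real.log y) ^ 2)) x := by
      have hden : ContinuousAt (fun y : ℝ => y ^ 2 * (Real.log y) ^ 2) x :=
        ((continuous_pow 2).continuousAt).mul
          (((Real.continuousAt_log hx0.ne').pow 2))
      exact continuousAt_const.sub (continuousAt_const.div hden (by positivity))
    refine (hg.continuousWithinAt).congr (fun y hy => ?_) ?_
    · exact if_neg (not_lt.mpr (le_trans hx hy))
    · exact if_neg (not_lt.mpr hx)

def Fst : StieltjesFunction ℝ := ⟨Ftail, Ftail_mono, Ftail_rightCont⟩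

lemma Fst_tendsto_atBot : Tendsto Fst atBot (𝓝 0) := by
  have : (fun y : ℝ => (0:ℝ)) =ᶠ[atBot] Fst := by
    filter_upwards [eventually_lt_atBot (2:ℝ)] with y hy
    exact (if_pos hy).symm
  exact tendsto_const_nhds.congr' this

lemma Fst_tendsto_atTop : Tendsto Fst atTop (𝓝 1) := by
  have hden : Tendsto (fun y : ℝ => y ^ 2 * (Real.log y) ^ 2) atTop atTop := by
    exact (tendsto_pow_atTop (two_ne_zero)).atTop_mul_atTop₀
      ((tendsto_pow_atTop (two_ne_zero)).comp Real.tendsto_log_atTop)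
  have h0 : Tendsto (fun y : ℝ => (y ^ 2 * (Real.log y) ^ 2)⁻¹) atTop (𝓝 0) :=
    tendsto_inv_atTop_zero.comp hden
  have h1 : Tendsto (fun y : ℝ => 1 - 1 / (y ^ 2 * (Real.log y) ^ 2)) atTop (𝓝 1) := by
    have := tendsto_const_nhds (α := ℝ) (x := (1:ℝ)) (f := atTop) |>.sub h0
    simpa [one_div] using this
  refine h1.congr' ?_
  filter_upwards [eventually_ge_atTop (2:ℝ)] with y hy
  exact (if_neg (not_lt.mpr hy)).symm

lemma exists_tail_measure : ∃ ν : Measure ℝ, IsProbabilityMeasure ν ∧ ν (Iic 0) = 0 ∧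
    ∀ x : ℝ, 2 ≤ x → (ν (Ioi x)).toReal = 1 / (x ^ 2 * (Real.log x) ^ 2) := by
  refine ⟨Fst.measure, Fst.isProbabilityMeasure Fst_tendsto_atBot Fst_tendsto_atTop, ?_, ?_⟩
  · rw [Fst.measure_Iic Fst_tendsto_atBot]
    have : Fst 0 = 0 := if_pos (by norm_num)
    rw [this]
    simp
  · intro x hx
    haveI : IsProbabilityMeasure Fst.measure :=
      Fst.isProbabilityMeasure Fst_tendsto_atBot Fst_tendsto_atTop
    have hcompl : Fst.measure (Ioi x) = 1 - Fst.measure (Iic x) := by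
      rw [← measure_univ (μ := Fst.measure), ← measure_compl measurableSet_Iic
        (measure_ne_top _ _), compl_Iic]
    have hIic : Fst.measure (Iic x) = ENNReal.ofReal (Fst x) := by
      rw [Fst.measure_Iic Fst_tendsto_atBot]; norm_num
    have hFx : Fst x = 1 - 1 / (x ^ 2 * (Real.log x) ^ 2) :=
      if_neg (not_lt.mpr hx)
    have hpos := denom_pos hx
    have htnn : 0 ≤ 1 / (x ^ 2 * (Real.log x) ^ 2) := by positivity
    have h1t : 0 ≤ 1 - 1 / (x ^ 2 * (Real.log x) ^ 2) := by
      have := tail_lt_one hx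
      linarith
    have key : Fst.measure (Ioi x) = ENNReal.ofReal (1 / (x ^ 2 * (Real.log x) ^ 2)) := by
      rw [hcompl, hIic, hFx]
      have hadd : ENNReal.ofReal (1 / (x ^ 2 * (Real.log x) ^ 2))
          + ENNReal.ofReal (1 - 1 / (x ^ 2 * (Real.log x) ^ 2)) = 1 := by
        rw [← ENNReal.ofReal_add htnn h1t]
        norm_num
      exact (ENNReal.eq_sub_of_add_eq ENNReal.ofReal_ne_top hadd).symm
    rw [key, ENNReal.toReal_ofReal htnn]

lemma moment_of_tail (ν : Measure ℝ) (hprob : IsProbabilityMeasure ν)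
    (htail : ∀ x : ℝ, 2 ≤ x → (ν (Ioi x)).toReal = 1 / (x ^ 2 * (Real.log x) ^ 2)) :
    ∀ ε ∈ Ioo (0:ℝ) 1,
      (∫⁻ x in Ioi (0:ℝ), ENNReal.ofReal (x ^ 2 * |Real.log x| ^ (1 - ε)) ∂ν) < ⊤ := by
  have htail' : ∀ x : ℝ, 2 ≤ x →
      ν (Ioi x) = ENNReal.ofReal (1 / (x ^ 2 * (Real.log x) ^ 2)) := by
    intro x hx
    rw [← htail x hx, ENNReal.ofReal_toReal (measure_ne_top ν _)]
  rintro ε ⟨hε0, hε1⟩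
  have hsplit : Ioi (0:ℝ) ⊆ Ioc 0 2 ∪ Ioi 2 := by
    intro x hx
    rcases le_or_gt x 2 with h | h
    · exact Or.inl ⟨hx, h⟩
    · exact Or.inr h
  have hA : (∫⁻ x in Ioc (0:ℝ) 2, ENNReal.ofReal (x ^ 2 * |Real.log x| ^ (1 - ε)) ∂ν) < ⊤ := by
    calc (∫⁻ x in Ioc (0:ℝ) 2, ENNReal.ofReal (x ^ 2 * |Real.log x| ^ (1 - ε)) ∂ν)
        ≤ ∫⁻ _ in Ioc (0:ℝ) 2, ENNReal.ofReal 8 ∂ν :=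
          setLIntegral_mono' measurableSet_Ioc fun x hx =>
            ENNReal.ofReal_le_ofReal (small_bound hε0 hε1 x hx)
      _ = ENNReal.ofReal 8 * ν (Ioc 0 2) := setLIntegral_const _ _
      _ < ⊤ := ENNReal.mul_lt_top ENNReal.ofReal_lt_top (measure_lt_top ν _)
  have hB : (∫⁻ x in Ioi (2:ℝ), ENNReal.ofReal (x ^ 2 * |Real.log x| ^ (1 - ε)) ∂ν) < ⊤ := by
    calc (∫⁻ x in Ioi (2:ℝ), ENNReal.ofReal (x ^ 2 * |Real.log x| ^ (1 - ε)) ∂ν)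
        ≤ ∫⁻ x in ⋃ n : ℕ, Ioc ((2:ℝ) ^ (n+1)) ((2:ℝ) ^ (n+2)),
            ENNReal.ofReal (x ^ 2 * |Real.log x| ^ (1 - ε)) ∂ν :=
          lintegral_mono_set cover_Ioi_two
      _ ≤ ∑' n : ℕ, ∫⁻ x in Ioc ((2:ℝ) ^ (n+1)) ((2:ℝ) ^ (n+2)),
            ENNReal.ofReal (x ^ 2 * |Real.log x| ^ (1 - ε)) ∂ν :=
          lintegral_iUnion_le _ _
      _ ≤ ∑' n : ℕ, ENNReal.ofReal
            (4 * ((n:ℝ) + 2) ^ (1 - ε) / (((n:ℝ) + 1) ^ 2 * (Real.log 2) ^ 2)) :=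
          ENNReal.tsum_le_tsum (annulus_bound ν htail' hε0 hε1)
      _ = ENNReal.ofReal (∑' n : ℕ,
            4 * ((n:ℝ) + 2) ^ (1 - ε) / (((n:ℝ) + 1) ^ 2 * (Real.log 2) ^ 2)) :=
          (ENNReal.ofReal_tsum_of_nonneg (fun n => by positivity) (summable_aux hε0 hε1)).symm
      _ < ⊤ := ENNReal.ofReal_lt_top
  calc (∫⁻ x in Ioi (0:ℝ), ENNReal.ofReal (x ^ 2 * |Real.log x| ^ (1 - ε)) ∂ν)
      ≤ ∫⁻ x in Ioc (0:ℝ) 2 ∪ Ioi 2, ENNReal.ofReal (x ^ 2 * |Real.log x| ^ (1 - ε)) ∂ν :=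
        lintegral_mono_set hsplit
    _ ≤ (∫⁻ x in Ioc (0:ℝ) 2, ENNReal.ofReal (x ^ 2 * |Real.log x| ^ (1 - ε)) ∂ν)
        + ∫⁻ x in Ioi (2:ℝ), ENNReal.ofReal (x ^ 2 * |Real.log x| ^ (1 - ε)) ∂ν :=
        lintegral_union_le _ _ _
    _ < ⊤ := ENNReal.add_lt_top.mpr ⟨hA, hB⟩

/-- the moment condition `∫ x²|log x|^{1-ε} ν(dx) < ∞` for all
`ε ∈ (0,1)` does not suffice for finiteness of the square-root tail integral;
a tail `x⁻²(log x)⁻²` gives a counterexample. -/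
theorem moment_condition_not_sufficient :
    (∃ ν : Measure ℝ, IsProbabilityMeasure ν ∧ ν (Iic 0) = 0 ∧
      (∀ ε ∈ Ioo (0:ℝ) 1,
        (∫⁻ x in Ioi (0:ℝ), ENNReal.ofReal (x ^ 2 * |Real.log x| ^ (1 - ε)) ∂ν) < ⊤) ∧
      (∫⁻ x in Ioi (0:ℝ), ENNReal.ofReal (Real.sqrt ((ν (Ioi x)).toReal))) = ⊤) ∧
    (∀ ν : Measure ℝ, IsProbabilityMeasure ν → ν (Iic 0) = 0 →
      (∀ x : ℝ, 2 ≤ x → (ν (Ioi x)).toReal = 1 / (x ^ 2 * (Real.log x) ^ 2)) →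
      (∀ ε ∈ Ioo (0:ℝ) 1,
        (∫⁻ x in Ioi (0:ℝ), ENNReal.ofReal (x ^ 2 * |Real.log x| ^ (1 - ε)) ∂ν) < ⊤) ∧
      (∫⁻ x in Ioi (0:ℝ), ENNReal.ofReal (Real.sqrt ((ν (Ioi x)).toReal))) = ⊤) := by
  constructor
  · obtain ⟨ν, hprob, hzero, htail⟩ := exists_tail_measure
    exact ⟨ν, hprob, hzero, moment_of_tail ν hprob htail, sqrt_tail_top ν htail⟩
  · intro ν hprob hzero htail
    exact ⟨moment_of_tail ν hprob htail, sqrt_tail_top ν htail⟩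
end DiffusiveSearch
end
end

section
/- Let p ∈ (0,1) and let I₊, I₋ > 0. Then positive real numbers k₁, k₂ satisfy the four equations exp(-k₁·I₊) = k₂/(k₁+k₂), exp(-k₂·I₋) = k₁/(k₁+k₂), (1-p)/p = (k₂²/k₁²)·(exp(k₁·I₊) − 1), and p/(1-p) = (k₁²/k₂²)·(exp(k₂·I₋) − 1) if and only if I₊/I₋ = ((1-p)·log(1-p))/(p·log p), k₁ = |log(1-p)|/I₊, and k₂ = |log p|/I₋. In particular, in this case k₁/(k₁+k₂) = p and k₂/(k₁+k₂) = 1-p. -/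
open MeasureTheory Set Real
open scoped ENNReal

noncomputable section

namespace DiffusiveSearch

private lemma aux_forward (p Iplus Iminus k1 k2 : ℝ) (hp : 0 < p) (hp1 : p < 1)
    (hIp : 0 < Iplus) (hIm : 0 < Iminus) (hk1 : 0 < k1) (hk2 : 0 < k2)
    (e1 : Real.exp (-(k1 * Iplus)) = k2 / (k1 + k2))
    (e2 : Real.exp (-(k2 * Iminus)) = k1 / (k1 + k2))
    (e3 : (1 - p) / p = (k2 ^ 2 / k1 ^ 2) * (Real.exp (k1 * Iplus) - 1)) :
    (Iplus / Iminus = ((1 - p) * Real.log (1 - p)) / (p * Real.log p) ∧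
      k1 = |Real.log (1 - p)| / Iplus ∧ k2 = |Real.log p| / Iminus) ∧
    k1 / (k1 + k2) = p ∧ k2 / (k1 + k2) = 1 - p := by
  have h1p : 0 < 1 - p := by linarith
  have hs : 0 < k1 + k2 := by linarith
  have hlp : Real.log p < 0 := Real.log_neg hp hp1
  have hl1p : Real.log (1 - p) < 0 := Real.log_neg h1p (by linarith)
  have habsp : |Real.log p| = -Real.log p := abs_of_neg hlp
  have habs1p : |Real.log (1 - p)| = -Real.log (1 - p) := abs_of_neg hl1p
  -- exp(k1 Iplus) = (k1+k2)/k2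
  have hmul : Real.exp (k1 * Iplus) * (k2 / (k1 + k2)) = 1 := by
    rw [← e1, ← Real.exp_add]; simp
  have hE1 : Real.exp (k1 * Iplus) = (k1 + k2) / k2 := by
    field_simp at hmul ⊢; linarith
  -- hence k2/k1 = (1-p)/p
  have hC : k1 * (1 - p) = p * k2 := by
    rw [hE1] at e3
    field_simp at e3
    exact mul_left_cancel₀ (mul_pos hk1 hk2).ne' (by linear_combination k2 * e3)
  have hk1s : k1 / (k1 + k2) = p := by field_simp; linarith
  have hk2s : k2 / (k1 + k2) = 1 - p := by field_simp; nlinarith [hC]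
  -- explicit values
  have hA : k1 * Iplus = -Real.log (1 - p) := by
    have h1 : Real.exp (-(k1 * Iplus)) = 1 - p := by rw [e1, hk2s]
    have := congrArg Real.log h1
    rw [Real.log_exp] at this
    linarith
  have hB : k2 * Iminus = -Real.log p := by
    have h1 : Real.exp (-(k2 * Iminus)) = p := by rw [e2, hk1s]
    have := congrArg Real.log h1
    rw [Real.log_exp] at this
    linarith
  refine ⟨⟨?_, ?_, ?_⟩, hk1s, hk2s⟩
  · have hplp : p * Real.log p ≠ 0 := by
      intro h
      rcases mul_eq_zero.mp h with h | h <;> [exact hp.ne' h; exact hlp.ne h]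
    rw [div_eq_div_iff hIm.ne' hplp]
    linear_combination (Iplus * p) * hB - ((1 - p) * Iminus) * hA + (Iplus * Iminus) * hC
  · rw [habs1p]; field_simp; linarith [hA]
  · rw [habsp]; field_simp; linarith [hB]

private lemma aux_backward (p Iplus Iminus k1 k2 : ℝ) (hp : 0 < p) (hp1 : p < 1)
    (hIp : 0 < Iplus) (hIm : 0 < Iminus)
    (hr : Iplus / Iminus = ((1 - p) * Real.log (1 - p)) / (p * Real.log p))
    (h1 : k1 = |Real.log (1 - p)| / Iplus) (h2 : k2 = |Real.log p| / Iminus) :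
    Real.exp (-(k1 * Iplus)) = k2 / (k1 + k2) ∧
    Real.exp (-(k2 * Iminus)) = k1 / (k1 + k2) ∧
    (1 - p) / p = (k2 ^ 2 / k1 ^ 2) * (Real.exp (k1 * Iplus) - 1) ∧
    p / (1 - p) = (k1 ^ 2 / k2 ^ 2) * (Real.exp (k2 * Iminus) - 1) := by
  have h1p : 0 < 1 - p := by linarith
  have hlp : Real.log p < 0 := Real.log_neg hp hp1
  have hl1p : Real.log (1 - p) < 0 := Real.log_neg h1p (by linarith)
  have habsp : |Real.log p| = -Real.log p := abs_of_neg hlp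
  have habs1p : |Real.log (1 - p)| = -Real.log (1 - p) := abs_of_neg hl1p
  have hk1 : 0 < k1 := by rw [h1, habs1p]; exact div_pos (by linarith) hIp
  have hk2 : 0 < k2 := by rw [h2, habsp]; exact div_pos (by linarith) hIm
  have hs : 0 < k1 + k2 := by linarith
  have hA : k1 * Iplus = -Real.log (1 - p) := by
    rw [h1, habs1p]; field_simp
  have hB : k2 * Iminus = -Real.log p := by
    rw [h2, habsp]; field_simp
  have hC : k1 * (1 - p) = p * k2 := by
    have hplp : p * Real.log p ≠ 0 := by
      intro h
      rcases mul_eq_zero.mp h with h | h <;> [exact hp.ne' h; exact hlp.ne h]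
    rw [div_eq_div_iff hIm.ne' hplp] at hr
    rw [h1, h2, habsp, habs1p]
    field_simp
    linear_combination hr
  have hE1 : Real.exp (-(k1 * Iplus)) = 1 - p := by
    rw [hA, neg_neg, Real.exp_log h1p]
  have hE2 : Real.exp (-(k2 * Iminus)) = p := by
    rw [hB, neg_neg, Real.exp_log hp]
  have hE1' : Real.exp (k1 * Iplus) = (1 - p)⁻¹ := by
    rw [hA, Real.exp_neg, Real.exp_log h1p]
  have hE2' : Real.exp (k2 * Iminus) = p⁻¹ := by
    rw [hB, Real.exp_neg, Real.exp_log hp]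
  refine ⟨?_, ?_, ?_, ?_⟩
  · rw [hE1]; field_simp; nlinarith [hC]
  · rw [hE2]; field_simp; nlinarith [hC]
  · rw [hE1']
    have hk2e : k2 = k1 * (1 - p) / p := by field_simp; linarith [hC]
    rw [hk2e]; field_simp; ring
  · rw [hE2']
    have hk1e : k1 = p * k2 / (1 - p) := by field_simp; linarith [hC]
    rw [hk1e]; field_simp

/-- the matching system for `k₁, k₂` is solvable iff the square
root balance condition holds, with the explicit solution; in that case
`k₁/(k₁+k₂) = p` and `k₂/(k₁+k₂) = 1-p`. -/
theorem matching_conditions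
    (p Iplus Iminus k1 k2 : ℝ) (hp : 0 < p) (hp1 : p < 1)
    (hIp : 0 < Iplus) (hIm : 0 < Iminus) (hk1 : 0 < k1) (hk2 : 0 < k2) :
    ((Real.exp (-(k1 * Iplus)) = k2 / (k1 + k2) ∧
      Real.exp (-(k2 * Iminus)) = k1 / (k1 + k2) ∧
      (1 - p) / p = (k2 ^ 2 / k1 ^ 2) * (Real.exp (k1 * Iplus) - 1) ∧
      p / (1 - p) = (k1 ^ 2 / k2 ^ 2) * (Real.exp (k2 * Iminus) - 1)) ↔
      (Iplus / Iminus = ((1 - p) * Real.log (1 - p)) / (p * Real.log p) ∧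
        k1 = |Real.log (1 - p)| / Iplus ∧ k2 = |Real.log p| / Iminus)) ∧
    ((Real.exp (-(k1 * Iplus)) = k2 / (k1 + k2) ∧
      Real.exp (-(k2 * Iminus)) = k1 / (k1 + k2) ∧
      (1 - p) / p = (k2 ^ 2 / k1 ^ 2) * (Real.exp (k1 * Iplus) - 1) ∧
      p / (1 - p) = (k1 ^ 2 / k2 ^ 2) * (Real.exp (k2 * Iminus) - 1)) →
      k1 / (k1 + k2) = p ∧ k2 / (k1 + k2) = 1 - p) := by
  constructor
  · constructor
    · rintro ⟨e1, e2, e3, e4⟩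
      exact (aux_forward p Iplus Iminus k1 k2 hp hp1 hIp hIm hk1 hk2 e1 e2 e3).1
    · rintro ⟨hr, h1, h2⟩
      exact aux_backward p Iplus Iminus k1 k2 hp hp1 hIp hIm hr h1 h2
  · rintro ⟨e1, e2, e3, e4⟩
    exact (aux_forward p Iplus Iminus k1 k2 hp hp1 hIp hIm hk1 hk2 e1 e2 e3).2
end DiffusiveSearch
end
end
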